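/- Let (Ω, 𝓕, P) be a probability space with a filtration (F_t)_{t ∈ ℕ}, F_t ⊆ 𝓕, and let H be a separable real Hilbert space. Let v : ℕ → Ω → H be such that each v_t is strongly F_t-measurable and square integrable, with E[v_t | F_{t−1}] = 0 almost surely for every t ≥ 1. Let Q : ℕ → Ω → (H →L[ℝ] H) be such that for every t ≥ 1, Q_t is strongly F_{t−1}-measurable and ‖Q_t(ω)‖ ≤ 1 for all ω. Define q_0 := v_0 and q_{t+1}(ω) := v_{t+1}(ω) + Q_{t+1}(ω)(q_t(ω)). Then for every t ∈ ℕ, E[‖q_t‖²] ≤ Σ_{r=0}^{t} E[‖v_r‖²]. -/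

import Mathlib

open MeasureTheory

/-- Accumulation bound for martingale-difference noise composed with adapted
contraction operators: if `q 0 = v 0` and `q (t+1) = v (t+1) + Q (t+1) (q t)`,
then `E[‖q t‖²] ≤ ∑_{r=0}^t E[‖v r‖²]`. -/
local notation "⟪" x ", " y "⟫" => @inner ℝ _ _ x y

lemma cross_zero {Ω : Type*} {m m0 : MeasurableSpace Ω} (hm : m ≤ m0) (μ : Measure Ω)
    [IsProbabilityMeasure μ]
    {H : Type*} [NormedAddCommGroup H] [InnerProductSpace ℝ H] [CompleteSpace H]
    {f g : Ω → H} (hf : MemLp f 2 μ) (hg : MemLp g 2 μ)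
    (hgm : AEStronglyMeasurable[m] g μ) (hf0 : μ[f|m] =ᵐ[μ] 0) :
    ∫ ω, ⟪f ω, g ω⟫ ∂μ = 0 := by
  haveI : SigmaFinite (μ.trim hm) := by infer_instance
  set F : Lp H 2 μ := hf.toLp f
  set G : Lp H 2 μ := hg.toLp g
  have hF : (F : Ω → H) =ᵐ[μ] f := hf.coeFn_toLp
  have hG : (G : Ω → H) =ᵐ[μ] g := hg.coeFn_toLp
  have hFG : ∫ ω, ⟪f ω, g ω⟫ ∂μ = ⟪F, G⟫ := by
    rw [L2.inner_def]
    refine (integral_congr_ae ((hF.and hG).mono fun ω ⟨h1, h2⟩ => ?_)).symm; simp only [h1, h2]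
  have hGm : AEStronglyMeasurable[m] (G : Ω → H) μ := hgm.congr hG.symm
  have hkey : ⟪((condExpL2 H ℝ hm F : Lp H 2 μ)), G⟫ = ⟪F, G⟫ :=
    inner_condExpL2_eq_inner_fun hm F G hGm
  have hce : ((condExpL2 H ℝ hm F : Lp H 2 μ) : Ω → H) =ᵐ[μ] 0 := by
    have h1 : ((condExpL2 H ℝ hm F : Lp H 2 μ) : Ω → H) =ᵐ[μ] μ[f|m] := by
      refine ae_eq_condExp_of_forall_setIntegral_eq hm (hf.integrable one_le_two)
        (fun s _ hμs => integrableOn_Lp_of_measure_ne_top _ fact_one_le_two_ennreal.elim hμs.ne)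
        (fun s hs hμs => ?_) (lpMeas.aestronglyMeasurable _)
      rw [integral_condExpL2_eq hm F hs hμs.ne]
      exact setIntegral_congr_ae (hm s hs) (hF.mono fun ω h _ => h)
    exact h1.trans hf0
  rw [hFG, ← hkey, L2.inner_def]
  rw [integral_congr_ae (g := fun _ => (0:ℝ)) (hce.mono fun ω h => by
    simp [h])]
  simp

theorem martingale_noise_accumulation
    {Ω : Type*} {m0 : MeasurableSpace Ω} (P : Measure Ω) [IsProbabilityMeasure P]
    (ℱ : Filtration ℕ m0)
    {H : Type*} [NormedAddCommGroup H] [InnerProductSpace ℝ H] [CompleteSpace H]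
    [SecondCountableTopology H]
    (v : ℕ → Ω → H)
    (hv_meas : ∀ t, StronglyMeasurable[ℱ t] (v t))
    (hv_sq : ∀ t, MemLp (v t) 2 P)
    (hv_mart : ∀ t : ℕ, 1 ≤ t → P[v t|ℱ (t - 1)] =ᵐ[P] 0)
    (Q : ℕ → Ω → (H →L[ℝ] H))
    (hQ_meas : ∀ t : ℕ, 1 ≤ t → StronglyMeasurable[ℱ (t - 1)] (Q t))
    (hQ_norm : ∀ t ω, ‖Q t ω‖ ≤ 1)
    (q : ℕ → Ω → H)
    (hq0 : q 0 = v 0)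
    (hq : ∀ t ω, q (t + 1) ω = v (t + 1) ω + Q (t + 1) ω (q t ω)) :
    ∀ t : ℕ, (∫ ω, ‖q t ω‖ ^ 2 ∂P) ≤ ∑ r ∈ Finset.range (t + 1), ∫ ω, ‖v r ω‖ ^ 2 ∂P := by
  -- measurability of q t
  have hq_meas : ∀ t, StronglyMeasurable[ℱ t] (q t) := by
    intro t
    induction t with
    | zero => rw [hq0]; exact hv_meas 0
    | succ t ih =>
      have hQm : StronglyMeasurable[ℱ t] (Q (t + 1)) := by
        simpa using hQ_meas (t + 1) (Nat.le_add_left 1 t)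
      have happ : StronglyMeasurable[ℱ t] (fun ω => Q (t + 1) ω (q t ω)) :=
        isBoundedBilinearMap_apply.continuous.comp_stronglyMeasurable (hQm.prodMk ih)
      have : StronglyMeasurable[ℱ (t + 1)] (fun ω => v (t + 1) ω + Q (t + 1) ω (q t ω)) :=
        (hv_meas (t + 1)).add (happ.mono (ℱ.mono (Nat.le_succ t)))
      have heq : q (t + 1) = fun ω => v (t + 1) ω + Q (t + 1) ω (q t ω) := funext (hq t)
      rw [heq]; exact this
  -- L² membership of q t
  have hq_mem : ∀ t, MemLp (q t) 2 P := by
    intro t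
    induction t with
    | zero => rw [hq0]; exact hv_sq 0
    | succ t ih =>
      have hQm : StronglyMeasurable[ℱ t] (Q (t + 1)) := by
        simpa using hQ_meas (t + 1) (Nat.le_add_left 1 t)
      have happ : StronglyMeasurable[ℱ t] (fun ω => Q (t + 1) ω (q t ω)) :=
        isBoundedBilinearMap_apply.continuous.comp_stronglyMeasurable (hQm.prodMk (hq_meas t))
      have hgm : MemLp (fun ω => Q (t + 1) ω (q t ω)) 2 P := by
        refine ih.of_le ((happ.mono (ℱ.le t)).aestronglyMeasurable) ?_
        filter_upwards with ω
        calc ‖Q (t + 1) ω (q t ω)‖ ≤ ‖Q (t + 1) ω‖ * ‖q t ω‖ :=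
              (Q (t + 1) ω).le_opNorm _
          _ ≤ 1 * ‖q t ω‖ := by
              gcongr; exact hQ_norm (t + 1) ω
          _ = ‖q t ω‖ := one_mul _
      have heq : q (t + 1) = fun ω => v (t + 1) ω + Q (t + 1) ω (q t ω) := funext (hq t)
      rw [heq]; exact (hv_sq (t + 1)).add hgm
  -- main induction
  intro t
  induction t with
  | zero =>
    rw [hq0]
    simp
  | succ t ih =>
    set g : Ω → H := fun ω => Q (t + 1) ω (q t ω) with hg_def
    have hQm : StronglyMeasurable[ℱ t] (Q (t + 1)) := by
      simpa using hQ_meas (t + 1) (Nat.le_add_left 1 t)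
    have happ : StronglyMeasurable[ℱ t] g :=
      isBoundedBilinearMap_apply.continuous.comp_stronglyMeasurable (hQm.prodMk (hq_meas t))
    have hbound : ∀ ω, ‖g ω‖ ≤ ‖q t ω‖ := by
      intro ω
      calc ‖Q (t + 1) ω (q t ω)‖ ≤ ‖Q (t + 1) ω‖ * ‖q t ω‖ := (Q (t + 1) ω).le_opNorm _
        _ ≤ 1 * ‖q t ω‖ := by gcongr; exact hQ_norm (t + 1) ω
        _ = ‖q t ω‖ := one_mul _
    have hg_mem : MemLp g 2 P := by
      refine (hq_mem t).of_le ((happ.mono (ℱ.le t)).aestronglyMeasurable) ?_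
      filter_upwards with ω using hbound ω
    -- integrability
    have hv1_int : Integrable (fun ω => ‖v (t + 1) ω‖ ^ 2) P :=
      (memLp_two_iff_integrable_sq_norm
        ((hv_meas (t + 1)).mono (ℱ.le _)).aestronglyMeasurable).mp (hv_sq (t + 1))
    have hg_int : Integrable (fun ω => ‖g ω‖ ^ 2) P :=
      (memLp_two_iff_integrable_sq_norm
        ((happ.mono (ℱ.le t)).aestronglyMeasurable)).mp hg_mem
    have hqt_int : Integrable (fun ω => ‖q t ω‖ ^ 2) P :=
      (memLp_two_iff_integrable_sq_norm
        ((hq_meas t).mono (ℱ.le t)).aestronglyMeasurable).mp (hq_mem t)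
    have hcross_int : Integrable (fun ω => ⟪v (t + 1) ω, g ω⟫) P := by
      have := L2.integrable_inner (𝕜 := ℝ) ((hv_sq (t + 1)).toLp _) (hg_mem.toLp _)
      refine this.congr ?_
      filter_upwards [(hv_sq (t + 1)).coeFn_toLp, hg_mem.coeFn_toLp] with ω h1 h2
      simp only [h1, h2]
    -- cross term is zero
    have hcross : ∫ ω, ⟪v (t + 1) ω, g ω⟫ ∂P = 0 := by
      refine cross_zero (ℱ.le t) P (hv_sq (t + 1)) hg_mem
        happ.aestronglyMeasurable ?_
      simpa using hv_mart (t + 1) (Nat.le_add_left 1 t)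
    -- expand the square
    have hexp : (fun ω => ‖q (t + 1) ω‖ ^ 2) =
        fun ω => ‖v (t + 1) ω‖ ^ 2 + 2 * ⟪v (t + 1) ω, g ω⟫ + ‖g ω‖ ^ 2 := by
      funext ω
      rw [hq t ω]
      exact norm_add_sq_real _ _
    have hsplit : ∫ ω, ‖q (t + 1) ω‖ ^ 2 ∂P =
        (∫ ω, ‖v (t + 1) ω‖ ^ 2 ∂P) + 2 * (∫ ω, ⟪v (t + 1) ω, g ω⟫ ∂P)
          + ∫ ω, ‖g ω‖ ^ 2 ∂P := by
      have hc2 : Integrable (fun ω => 2 * ⟪v (t + 1) ω, g ω⟫) P := hcross_int.const_mul 2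
      have hsum_int : Integrable
          (fun ω => ‖v (t + 1) ω‖ ^ 2 + 2 * ⟪v (t + 1) ω, g ω⟫) P := hv1_int.add hc2
      rw [hexp, integral_add hsum_int hg_int, integral_add hv1_int hc2, MeasureTheory.integral_const_mul]
    have hgle : ∫ ω, ‖g ω‖ ^ 2 ∂P ≤ ∫ ω, ‖q t ω‖ ^ 2 ∂P := by
      refine integral_mono hg_int hqt_int fun ω => ?_
      have := hbound ω
      have h2 : (0:ℝ) ≤ ‖g ω‖ := norm_nonneg _
      nlinarith
    rw [hsplit, hcross, Finset.sum_range_succ]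
    linarith
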